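/- Let 0 < p < ∞ and let u, w be weights on ℝ and (0,∞) respectively. Suppose there is a constant C such that for every b > 0, ‖Hχ_(0,b)‖_{Λ^{p,∞}_u(w)} ≤ C ‖χ_(0,b)‖_{Λ^p_u(w)}. Then ∫_ℝ u(x) dx = ∞ and ∫_0^∞ w(t) dt = ∞; that is, u ∉ L^1(ℝ) and w ∉ L^1(0,∞). -/

import Mathlib

open MeasureTheory Filter Topology
open scoped ENNReal NNReal

noncomputable section

/-- The `u`-measure of a set `E`, `u(E) = ∫_E u`, as an extended nonnegative real. -/
def wMeas (u : ℝ → ℝ) (E : Set ℝ) : ℝ≥0∞ := ∫⁻ x in E, ENNReal.ofReal (u x)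

/-- The `u`-measure of a set `E`, `u(E) = ∫_E u(x) dx`, as a real number. -/
def wInt (u : ℝ → ℝ) (E : Set ℝ) : ℝ := ∫ x in E, u x

/-- `W(r) = ∫_0^r w(s) ds`. -/
def Wf (w : ℝ → ℝ) (r : ℝ) : ℝ := ∫ t in Set.Ioo (0:ℝ) r, w t

/-- A weight on `ℝ`: a positive locally integrable function. -/
def IsWeight (u : ℝ → ℝ) : Prop :=
  (∀ x, 0 < u x) ∧ MeasureTheory.LocallyIntegrable u volume

/-- A weight on `(0,∞)`: positive there and locally integrable on `(0,r)` for every `r > 0`. -/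
def IsWeightOn (w : ℝ → ℝ) : Prop :=
  (∀ t, 0 < t → 0 < w t) ∧ ∀ r, 0 < r → MeasureTheory.IntegrableOn w (Set.Ioo (0:ℝ) r) volume

/-- Decreasing rearrangement (with respect to the weight `u`) of an `ℝ≥0∞`-valued function. -/
def rearrE (u : ℝ → ℝ) (g : ℝ → ℝ≥0∞) (t : ℝ) : ℝ≥0∞ :=
  sInf {s : ℝ≥0∞ | wMeas u {x | s < g x} ≤ ENNReal.ofReal t}

/-- Decreasing rearrangement `f*_u` of `f` with respect to the weight `u`. -/
def rearr (u f : ℝ → ℝ) (t : ℝ) : ℝ≥0∞ :=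
  rearrE u (fun x => ENNReal.ofReal |f x|) t

/-- The quasinorm of `Λ^p_u(w)` for `ℝ≥0∞`-valued functions. -/
def lorentzNormE (p : ℝ) (u w : ℝ → ℝ) (g : ℝ → ℝ≥0∞) : ℝ≥0∞ :=
  (∫⁻ t in Set.Ioi (0:ℝ), rearrE u g t ^ p * ENNReal.ofReal (w t)) ^ (1/p)

/-- The quasinorm of the weighted Lorentz space `Λ^p_u(w)`. -/
def lorentzNorm (p : ℝ) (u w f : ℝ → ℝ) : ℝ≥0∞ :=
  lorentzNormE p u w (fun x => ENNReal.ofReal |f x|)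

/-- The quasinorm of `Λ^{p,∞}_u(w)` for `ℝ≥0∞`-valued functions. -/
def weakLorentzNormE (p : ℝ) (u w : ℝ → ℝ) (g : ℝ → ℝ≥0∞) : ℝ≥0∞ :=
  ⨆ t ∈ Set.Ioi (0:ℝ), ENNReal.ofReal (Wf w t) ^ (1/p) * rearrE u g t

/-- The quasinorm of the weak weighted Lorentz space `Λ^{p,∞}_u(w)`. -/
def weakLorentzNorm (p : ℝ) (u w f : ℝ → ℝ) : ℝ≥0∞ :=
  weakLorentzNormE p u w (fun x => ENNReal.ofReal |f x|)

/-- Membership in `Λ^p_u(w)`. -/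
def MemLambda (p : ℝ) (u w f : ℝ → ℝ) : Prop :=
  Measurable f ∧ lorentzNorm p u w f < ∞

/-- The quasinorm of the Lorentz space `L^{p,q}(u)`, `0 < q ≤ ∞`. -/
def lpqNorm (p : ℝ) (q : ℝ≥0∞) (u f : ℝ → ℝ) : ℝ≥0∞ :=
  if q = ∞ then ⨆ t ∈ Set.Ioi (0:ℝ), ENNReal.ofReal t ^ (1/p) * rearr u f t
  else (∫⁻ t in Set.Ioi (0:ℝ),
      (ENNReal.ofReal t ^ (1/p) * rearr u f t) ^ q.toReal / ENNReal.ofReal t) ^ (1/q.toReal)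

/-- Membership in `L^{p,q}(u)`. -/
def MemLpq (p : ℝ) (q : ℝ≥0∞) (u f : ℝ → ℝ) : Prop :=
  Measurable f ∧ lpqNorm p q u f < ∞

/-- The associate norm `‖g‖_{(Λ^p_u(w))'}`. -/
def assocNorm (p : ℝ) (u w g : ℝ → ℝ) : ℝ≥0∞ :=
  ⨆ (f : ℝ → ℝ) (_ : MemLambda p u w f) (_ : lorentzNorm p u w f ≠ 0),
    ENNReal.ofReal |∫ x, f x * g x * u x| / lorentzNorm p u w f

/-- The truncated Hilbert integral `∫_{|x−y|>ε} f(y)/(x−y) dy`. -/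
def pvIntegral (f : ℝ → ℝ) (x ε : ℝ) : ℝ :=
  ∫ y in {y : ℝ | ε < |x - y|}, f y / (x - y)

/-- The principal value limit defining `Hf(x)` exists and equals `L`. -/
def HasHilbert (f : ℝ → ℝ) (x L : ℝ) : Prop :=
  Filter.Tendsto (fun ε : ℝ => (1 / Real.pi) * pvIntegral f x ε) (𝓝[>] 0) (𝓝 L)

/-- The Hilbert transform `Hf(x)` (junk value where the principal value does not exist). -/
def hilbert (f : ℝ → ℝ) (x : ℝ) : ℝ :=
  limUnder (𝓝[>] (0:ℝ)) (fun ε => (1 / Real.pi) * pvIntegral f x ε)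

/-- The Hilbert maximal operator `H*f(x)`. -/
def hilbertMax (f : ℝ → ℝ) (x : ℝ) : ℝ≥0∞ :=
  ⨆ ε ∈ Set.Ioi (0:ℝ), ENNReal.ofReal ((1 / Real.pi) * |pvIntegral f x ε|)

/-- The Hardy–Littlewood maximal operator over intervals of `ℝ`. -/
def maxOp (u : ℝ → ℝ) (x : ℝ) : ℝ≥0∞ :=
  ⨆ (a : ℝ) (b : ℝ) (_ : x ∈ Set.Ioo a b),
    (∫⁻ y in Set.Ioo a b, ENNReal.ofReal |u y|) / ENNReal.ofReal (b - a)

/-- The Muckenhoupt class `A_1`: `Mu ≤ C u` a.e. -/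
def A1 (u : ℝ → ℝ) : Prop :=
  ∃ C : ℝ, 0 < C ∧ ∀ᵐ x : ℝ ∂volume, maxOp u x ≤ ENNReal.ofReal (C * u x)

/-- The Muckenhoupt class `A_p`, `p > 1`. -/
def Ap (p : ℝ) (u : ℝ → ℝ) : Prop :=
  ∃ C : ℝ, 0 < C ∧ ∀ a b : ℝ, a < b →
    ((∫⁻ x in Set.Ioo a b, ENNReal.ofReal (u x)) / ENNReal.ofReal (b - a)) *
      ((∫⁻ x in Set.Ioo a b, ENNReal.ofReal (u x ^ (-1 / (p - 1)))) /
        ENNReal.ofReal (b - a)) ^ (p - 1)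
      ≤ ENNReal.ofReal C

/-- The class `B_p`: `∫_r^∞ (r/t)^p w(t) dt ≤ C W(r)`. -/
def Bp (p : ℝ) (w : ℝ → ℝ) : Prop :=
  ∃ C : ℝ, 0 < C ∧ ∀ r : ℝ, 0 < r →
    (∫⁻ t in Set.Ioi r, ENNReal.ofReal ((r / t) ^ p * w t)) ≤ ENNReal.ofReal (C * Wf w r)

/-- The class `B_{p,∞}`: the Hardy operator maps `L^p_dec(w)` to `L^{p,∞}(w)`. -/
def BpInfty (p : ℝ) (w : ℝ → ℝ) : Prop :=
  ∃ C : ℝ, 0 < C ∧ ∀ f : ℝ → ℝ, (∀ t, 0 < t → 0 ≤ f t) → AntitoneOn f (Set.Ioi 0) →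
    ∀ t : ℝ, 0 < t →
      ENNReal.ofReal (Wf w t) ^ (1/p) *
          ((∫⁻ s in Set.Ioo (0:ℝ) t, ENNReal.ofReal (f s)) / ENNReal.ofReal t)
        ≤ ENNReal.ofReal C *
            (∫⁻ s in Set.Ioi (0:ℝ), ENNReal.ofReal (f s) ^ p * ENNReal.ofReal (w s)) ^ (1/p)

/-- The class `B*_∞`: `∫_0^r W(t)/t dt ≤ C W(r)`. -/
def BstarInfty (w : ℝ → ℝ) : Prop :=
  ∃ C : ℝ, 0 < C ∧ ∀ r : ℝ, 0 < r →
    (∫⁻ t in Set.Ioo (0:ℝ) r, ENNReal.ofReal (Wf w t / t)) ≤ ENNReal.ofReal (C * Wf w r)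

/-- The `Δ_2` condition: `W(2r) ≤ C W(r)`. -/
def Delta2 (w : ℝ → ℝ) : Prop :=
  ∃ C : ℝ, 0 < C ∧ ∀ r : ℝ, 0 < r → Wf w (2 * r) ≤ C * Wf w r

/-- A doubling weight on `ℝ`: `u(2I) ≤ C u(I)` for every bounded interval `I`. -/
def DoublingWeight (u : ℝ → ℝ) : Prop :=
  ∃ C : ℝ, 0 < C ∧ ∀ c r : ℝ, 0 < r →
    wInt u (Set.Ioo (c - 2*r) (c + 2*r)) ≤ C * wInt u (Set.Ioo (c - r) (c + r))

/-- `φ_I(t) = sup{|E| : E ⊆ I, u(E) = t}` for `I = (a,b)`. -/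
def phiI (u : ℝ → ℝ) (a b t : ℝ) : ℝ :=
  sSup {m : ℝ | ∃ E : Set ℝ, MeasurableSet E ∧ E ⊆ Set.Ioo a b ∧
    wInt u E = t ∧ (volume E).toReal = m}

/-- The index `p_w`:  `inf{p > 0 : t^p/W(t) ∈ L^{p'-1}((0,1), dt/t)}`, where for `p ≤ 1`
(`p' = ∞`) the condition means essential boundedness on `(0,1)`. -/
def pwIndex (w : ℝ → ℝ) : ℝ :=
  sInf {p : ℝ | 0 < p ∧
    ((p ≤ 1 ∧ ∃ C : ℝ, ∀ᵐ t ∂(volume.restrict (Set.Ioo (0:ℝ) 1)), t ^ p / Wf w t ≤ C) ∨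
     (1 < p ∧ (∫⁻ t in Set.Ioo (0:ℝ) 1,
        ENNReal.ofReal ((t ^ p / Wf w t) ^ (1 / (p - 1)) / t)) < ∞))}

open intervalIntegral in
lemma pv_eval_aux (b x ε : ℝ) (hb : 0 < b) (hx : x < 0) (hε : ε ∈ Set.Ioo (0:ℝ) (-x)) :
    pvIntegral ((Set.Ioo (0:ℝ) b).indicator fun _ => (1:ℝ)) x ε
      = - Real.log ((b - x) / (-x)) := by
  have hx0 : (0:ℝ) < -x := by linarith
  have hsub : Set.Ioo (0:ℝ) b ⊆ {y : ℝ | ε < |x - y|} := by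
    intro y hy
    have h1 : x - y < 0 := by linarith [hy.1]
    simp only [Set.mem_setOf_eq, abs_of_neg h1]
    linarith [hε.2, hy.1]
  have hfun : ∀ y : ℝ, ((Set.Ioo (0:ℝ) b).indicator (fun _ => (1:ℝ))) y / (x - y)
      = (Set.Ioo (0:ℝ) b).indicator (fun y => (x - y)⁻¹) y := by
    intro y
    by_cases hy : y ∈ Set.Ioo (0:ℝ) b
    · simp [Set.indicator_of_mem hy, one_div]
    · simp [Set.indicator_of_notMem hy]
  have step1 : pvIntegral ((Set.Ioo (0:ℝ) b).indicator fun _ => (1:ℝ)) x ε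
      = ∫ y in Set.Ioo (0:ℝ) b, (x - y)⁻¹ := by
    unfold pvIntegral
    rw [integral_congr_ae (ae_of_all _ hfun), setIntegral_indicator measurableSet_Ioo,
      Set.inter_eq_self_of_subset_right hsub]
  rw [step1, ← integral_Ioc_eq_integral_Ioo, ← intervalIntegral.integral_of_le hb.le]
  have hfun2 : ∀ y : ℝ, (x - y)⁻¹ = -((y - x)⁻¹) := by
    intro y; rw [← inv_neg]; ring_nf
  rw [intervalIntegral.integral_congr (fun y _ => hfun2 y), intervalIntegral.integral_neg,
    intervalIntegral.integral_comp_sub_right (fun t => t⁻¹) x,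
    integral_inv (by
      apply Set.notMem_uIcc_of_lt <;> linarith), zero_sub]

lemma hilbert_eval_aux (b x : ℝ) (hb : 0 < b) (hx : x < 0) :
    hilbert ((Set.Ioo (0:ℝ) b).indicator fun _ => (1:ℝ)) x
      = -((1 / Real.pi) * Real.log ((b - x) / (-x))) := by
  have hx0 : (0:ℝ) < -x := by linarith
  have hmem : Set.Ioo (0:ℝ) (-x) ∈ 𝓝[>] (0:ℝ) :=
    Ioo_mem_nhdsGT_of_mem ⟨le_refl 0, hx0⟩
  apply Filter.Tendsto.limUnder_eq
  apply Filter.Tendsto.congr' _ tendsto_const_nhds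
  filter_upwards [hmem] with ε hε
  rw [pv_eval_aux b x ε hb hx hε]; ring

lemma rearrE_le_one_aux (u : ℝ → ℝ) (g : ℝ → ℝ≥0∞) (hg : ∀ x, g x ≤ 1) (t : ℝ) :
    rearrE u g t ≤ 1 := by
  apply sInf_le
  have hempty : {x : ℝ | (1:ℝ≥0∞) < g x} = ∅ := by
    ext x; simp [not_lt.mpr (hg x)]
  simp [Set.mem_setOf_eq, wMeas, hempty]

lemma rearrE_eq_zero_aux (u : ℝ → ℝ) (g : ℝ → ℝ≥0∞) (S : Set ℝ) (hg : ∀ x, x ∉ S → g x = 0)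
    (t : ℝ) (ht : wMeas u S ≤ ENNReal.ofReal t) : rearrE u g t = 0 := by
  have h0 : (0:ℝ≥0∞) ∈ {s : ℝ≥0∞ | wMeas u {x | s < g x} ≤ ENNReal.ofReal t} := by
    refine le_trans (lintegral_mono_set ?_) ht
    intro x hx
    by_contra hxS
    simp only [Set.mem_setOf_eq, hg x hxS] at hx
    exact lt_irrefl _ hx
  exact le_antisymm (sInf_le h0) zero_le

lemma le_rearrE_aux (u : ℝ → ℝ) (g : ℝ → ℝ≥0∞) (t : ℝ) (c : ℝ≥0∞) (S : Set ℝ)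
    (hS : ∀ x ∈ S, c ≤ g x) (hm : ENNReal.ofReal t < wMeas u S) :
    c ≤ rearrE u g t := by
  apply le_sInf
  intro s hs
  by_contra hlt
  push_neg at hlt
  have hsub : S ⊆ {x | s < g x} := fun x hx => lt_of_lt_of_le hlt (hS x hx)
  exact absurd ((lintegral_mono_set hsub).trans hs) (not_le.mpr hm)

lemma no_bound_aux (A D : ℝ≥0∞) (hA0 : A ≠ 0) (hAtop : A ≠ ∞) (hD : D ≠ ∞)
    (key : ∀ b : ℝ, 1 ≤ b →
      A * ENNReal.ofReal ((1 / Real.pi) * Real.log ((b + 1) / 2)) ≤ D) :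
    False := by
  have hπ : 0 < Real.pi := Real.pi_pos
  set K := (D / A).toReal with hK
  have hKnn : 0 ≤ K := ENNReal.toReal_nonneg
  set b := 2 * Real.exp (Real.pi * (K + 1)) with hb
  have hexp : (1:ℝ) ≤ Real.exp (Real.pi * (K + 1)) := Real.one_le_exp (by positivity)
  have hb1 : (1:ℝ) ≤ b := by nlinarith
  have hc : K + 1 ≤ (1 / Real.pi) * Real.log ((b + 1) / 2) := by
    have h1 : Real.exp (Real.pi * (K + 1)) ≤ (b + 1) / 2 := by
      rw [hb]; nlinarith [Real.exp_pos (Real.pi * (K + 1))]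
    have h2 : Real.pi * (K + 1) ≤ Real.log ((b + 1) / 2) := by
      rw [← Real.log_exp (Real.pi * (K + 1))]
      exact Real.log_le_log (Real.exp_pos _) h1
    calc K + 1 = (1 / Real.pi) * (Real.pi * (K + 1)) := by field_simp
    _ ≤ (1 / Real.pi) * Real.log ((b + 1) / 2) := by
        apply mul_le_mul_of_nonneg_left h2 (by positivity)
  have hDA : D / A ≠ ∞ := by
    intro hcon
    rw [ENNReal.div_eq_top] at hcon
    rcases hcon with ⟨_, h⟩ | ⟨h, _⟩
    · exact hA0 h
    · exact hD h
  have hlt : D / A < ENNReal.ofReal ((1 / Real.pi) * Real.log ((b + 1) / 2)) := by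
    have hDA' : D / A = ENNReal.ofReal K := by rw [hK, ENNReal.ofReal_toReal hDA]
    rw [hDA']
    rw [ENNReal.ofReal_lt_ofReal_iff (by linarith)]
    linarith
  have h3 : D < A * ENNReal.ofReal ((1 / Real.pi) * Real.log ((b + 1) / 2)) := by
    calc D = A * (D / A) := (ENNReal.mul_div_cancel hA0 hAtop).symm
    _ < _ := (ENNReal.mul_lt_mul_iff_right hA0 hAtop).mpr hlt
  exact absurd (key b hb1) (not_le.mpr h3)

/-- the weak-type inequality on characteristic functions of intervals `(0,b)`
forces `u ∉ L¹(ℝ)` and `w ∉ L¹(0,∞)`. -/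
theorem not_integrable_of_weak_type (p : ℝ) (hp : 0 < p) (u w : ℝ → ℝ)
    (hu : IsWeight u) (hw : IsWeightOn w)
    (h : ∃ C : ℝ, 0 < C ∧ ∀ b : ℝ, 0 < b →
      weakLorentzNorm p u w (hilbert ((Set.Ioo (0:ℝ) b).indicator fun _ => (1:ℝ)))
        ≤ ENNReal.ofReal C * lorentzNorm p u w ((Set.Ioo (0:ℝ) b).indicator fun _ => (1:ℝ))) :
    (∫⁻ x : ℝ, ENNReal.ofReal (u x)) = ∞ ∧
      (∫⁻ t in Set.Ioi (0:ℝ), ENNReal.ofReal (w t)) = ∞ := by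
  obtain ⟨C, hC, hkey⟩ := h
  obtain ⟨hupos, huloc⟩ := hu
  obtain ⟨hwpos, hwint⟩ := hw
  -- the u-measure of (-2,-1) is positive
  have huae : AEMeasurable (fun x => ENNReal.ofReal (u x))
      (volume.restrict (Set.Ioo (-2:ℝ) (-1))) :=
    ENNReal.measurable_ofReal.comp_aemeasurable
      huloc.aestronglyMeasurable.aemeasurable.restrict
  have hm : 0 < wMeas u (Set.Ioo (-2:ℝ) (-1)) := by
    rw [pos_iff_ne_zero]
    intro h0
    simp only [wMeas] at h0
    have hae := (lintegral_eq_zero_iff' huae).mp h0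
    have h2 : ∀ᵐ x ∂(volume.restrict (Set.Ioo (-2:ℝ) (-1))), False := by
      filter_upwards [hae] with x hx
      have hupx := hupos x
      simp only [Pi.zero_apply, ENNReal.ofReal_eq_zero] at hx
      linarith
    have h3 := Filter.eventually_false_iff_eq_bot.mp h2
    rw [ae_eq_bot, Measure.restrict_eq_zero, Real.volume_Ioo] at h3
    rw [ENNReal.ofReal_eq_zero] at h3
    norm_num at h3
  obtain ⟨t₀, ht₀nn, ht₀pos', ht₀lt⟩ := ENNReal.lt_iff_exists_real_btwn.mp hm
  have ht₀ : 0 < t₀ := ENNReal.ofReal_pos.mp ht₀pos'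
  have hWpos : 0 < Wf w t₀ := by
    simp only [Wf]
    rw [setIntegral_pos_iff_support_of_nonneg_ae
      ((ae_restrict_iff' measurableSet_Ioo).mpr (ae_of_all _ fun t ht => (hwpos t ht.1).le))
      (hwint t₀ ht₀)]
    have hsub : Set.Ioo (0:ℝ) t₀ ⊆ Function.support w ∩ Set.Ioo (0:ℝ) t₀ :=
      Set.subset_inter (fun t ht => ne_of_gt (hwpos t ht.1)) subset_rfl
    calc (0:ℝ≥0∞) < ENNReal.ofReal t₀ := ht₀pos'
    _ = volume (Set.Ioo (0:ℝ) t₀) := by rw [Real.volume_Ioo]; norm_num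
    _ ≤ _ := measure_mono hsub
  set A := ENNReal.ofReal (Wf w t₀) ^ (1/p) with hA
  have hA0 : A ≠ 0 :=
    ne_of_gt (ENNReal.rpow_pos (ENNReal.ofReal_pos.mpr hWpos) ENNReal.ofReal_ne_top)
  have hAtop : A ≠ ∞ := ENNReal.rpow_ne_top_of_nonneg (by positivity) ENNReal.ofReal_ne_top
  -- lower bound on the weak Lorentz norm of the Hilbert transform
  have hlow : ∀ b : ℝ, 1 ≤ b →
      A * ENNReal.ofReal ((1/Real.pi) * Real.log ((b+1)/2))
        ≤ weakLorentzNorm p u w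
            (hilbert ((Set.Ioo (0:ℝ) b).indicator fun _ => (1:ℝ))) := by
    intro b hb1
    have hb : 0 < b := by linarith
    have hπ : 0 < Real.pi := Real.pi_pos
    set g := fun x =>
      ENNReal.ofReal |hilbert ((Set.Ioo (0:ℝ) b).indicator fun _ => (1:ℝ)) x| with hgdef
    have hg : ∀ x ∈ Set.Ioo (-2:ℝ) (-1),
        ENNReal.ofReal ((1/Real.pi) * Real.log ((b+1)/2)) ≤ g x := by
      intro x hx
      have hx0 : x < 0 := by linarith [hx.2]
      have hxm : (0:ℝ) < -x := by linarith
      have habs : |hilbert ((Set.Ioo (0:ℝ) b).indicator fun _ => (1:ℝ)) x|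
          = (1/Real.pi) * Real.log ((b-x)/(-x)) := by
        rw [hilbert_eval_aux b x hb hx0, abs_neg, abs_of_nonneg]
        apply mul_nonneg (by positivity)
        apply Real.log_nonneg
        rw [le_div_iff₀ hxm]; linarith
      show ENNReal.ofReal _ ≤ ENNReal.ofReal _
      rw [habs]
      apply ENNReal.ofReal_le_ofReal
      apply mul_le_mul_of_nonneg_left _ (by positivity)
      apply Real.log_le_log (by positivity)
      rw [div_le_div_iff₀ (by norm_num) hxm]
      nlinarith [mul_nonneg hb.le (show (0:ℝ) ≤ 2 + x by linarith [hx.1]), hx.1, hx.2]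
    have hre : ENNReal.ofReal ((1/Real.pi) * Real.log ((b+1)/2)) ≤ rearrE u g t₀ :=
      le_rearrE_aux u g t₀ _ _ hg ht₀lt
    calc A * ENNReal.ofReal ((1/Real.pi) * Real.log ((b+1)/2))
        ≤ ENNReal.ofReal (Wf w t₀) ^ (1/p) * rearrE u g t₀ := mul_le_mul_right hre A
    _ ≤ _ := by
        simp only [weakLorentzNorm, weakLorentzNormE]
        exact le_iSup₂_of_le t₀ ht₀ le_rfl
  -- the indicator functions are bounded by 1
  have hgle1 : ∀ b x : ℝ,
      ENNReal.ofReal |((Set.Ioo (0:ℝ) b).indicator fun _ => (1:ℝ)) x| ≤ 1 := by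
    intro b x
    by_cases hx : x ∈ Set.Ioo (0:ℝ) b <;>
      simp [Set.indicator_apply, hx]
  constructor
  · -- u is not integrable
    by_contra hU
    have hUlt : (∫⁻ x : ℝ, ENNReal.ofReal (u x)) ≠ ∞ := hU
    set M := (∫⁻ x : ℝ, ENNReal.ofReal (u x)).toReal + 1 with hM
    have hMpos : 0 < M := by positivity
    have hB : (∫⁻ t in Set.Ioo (0:ℝ) M, ENNReal.ofReal (w t)) < ∞ :=
      (hwint M hMpos).lintegral_lt_top
    set B := (∫⁻ t in Set.Ioo (0:ℝ) M, ENNReal.ofReal (w t)) ^ (1/p) with hBdef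
    have hub : ∀ b : ℝ, 0 < b →
        lorentzNorm p u w ((Set.Ioo (0:ℝ) b).indicator fun _ => (1:ℝ)) ≤ B := by
      intro b hb
      simp only [lorentzNorm, lorentzNormE, hBdef]
      apply ENNReal.rpow_le_rpow _ (by positivity)
      set gf := fun x =>
        ENNReal.ofReal |((Set.Ioo (0:ℝ) b).indicator fun _ => (1:ℝ)) x| with hgfdef
      have hwub : wMeas u (Set.Ioo (0:ℝ) b) ≤ ENNReal.ofReal M := by
        calc wMeas u (Set.Ioo (0:ℝ) b) ≤ ∫⁻ x : ℝ, ENNReal.ofReal (u x) :=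
              setLIntegral_le_lintegral _ _
        _ = ENNReal.ofReal ((∫⁻ x : ℝ, ENNReal.ofReal (u x)).toReal) :=
              (ENNReal.ofReal_toReal hUlt).symm
        _ ≤ ENNReal.ofReal M := ENNReal.ofReal_le_ofReal (by rw [hM]; linarith)
      calc ∫⁻ t in Set.Ioi (0:ℝ), rearrE u gf t ^ p * ENNReal.ofReal (w t)
          ≤ ∫⁻ t in Set.Ioi (0:ℝ),
              (Set.Ioo (0:ℝ) M).indicator (fun t => ENNReal.ofReal (w t)) t := by
            apply lintegral_mono_ae
            rw [ae_restrict_iff' measurableSet_Ioi]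
            apply ae_of_all
            intro t ht
            by_cases htM : t < M
            · have htmem : t ∈ Set.Ioo (0:ℝ) M := ⟨ht, htM⟩
              rw [Set.indicator_of_mem htmem (fun t => ENNReal.ofReal (w t))]
              calc rearrE u gf t ^ p * ENNReal.ofReal (w t)
                  ≤ 1 * ENNReal.ofReal (w t) := by
                    apply mul_le_mul_left
                    calc rearrE u gf t ^ p ≤ 1 ^ p :=
                          ENNReal.rpow_le_rpow (rearrE_le_one_aux u gf (hgle1 b) t) hp.le
                    _ = 1 := ENNReal.one_rpow p
              _ = ENNReal.ofReal (w t) := one_mul _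
            · have h0 : rearrE u gf t = 0 := by
                apply rearrE_eq_zero_aux u gf (Set.Ioo (0:ℝ) b) _ t
                · exact le_trans hwub (ENNReal.ofReal_le_ofReal (by push_neg at htM; linarith))
                · intro x hx
                  simp [hgfdef, Set.indicator_of_notMem hx]
              rw [h0, ENNReal.zero_rpow_of_pos hp, zero_mul]
              exact zero_le
          _ = ∫⁻ t in Set.Ioo (0:ℝ) M, ENNReal.ofReal (w t) := by
            rw [lintegral_indicator measurableSet_Ioo,
              Measure.restrict_restrict measurableSet_Ioo,
              Set.inter_eq_self_of_subset_left (fun x hx => hx.1)]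
    apply no_bound_aux A (ENNReal.ofReal C * B) hA0 hAtop
    · exact ENNReal.mul_ne_top ENNReal.ofReal_ne_top
        (ENNReal.rpow_ne_top_of_nonneg (by positivity) hB.ne)
    · intro b hb1
      have hb : 0 < b := by linarith
      exact le_trans (hlow b hb1) (le_trans (hkey b hb) (mul_le_mul_right (hub b hb) _))
  · -- w is not integrable
    by_contra hT
    have hub : ∀ b : ℝ, 0 < b →
        lorentzNorm p u w ((Set.Ioo (0:ℝ) b).indicator fun _ => (1:ℝ))
          ≤ (∫⁻ t in Set.Ioi (0:ℝ), ENNReal.ofReal (w t)) ^ (1/p) := by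
      intro b hb
      simp only [lorentzNorm, lorentzNormE]
      apply ENNReal.rpow_le_rpow _ (by positivity)
      apply lintegral_mono
      intro t
      calc rearrE u (fun x =>
            ENNReal.ofReal |((Set.Ioo (0:ℝ) b).indicator fun _ => (1:ℝ)) x|) t ^ p
            * ENNReal.ofReal (w t)
          ≤ 1 * ENNReal.ofReal (w t) := by
            apply mul_le_mul_left
            calc _ ≤ (1:ℝ≥0∞) ^ p :=
                  ENNReal.rpow_le_rpow (rearrE_le_one_aux u _ (hgle1 b) t) hp.le
            _ = 1 := ENNReal.one_rpow p
      _ = ENNReal.ofReal (w t) := one_mul _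
    apply no_bound_aux A
      (ENNReal.ofReal C * (∫⁻ t in Set.Ioi (0:ℝ), ENNReal.ofReal (w t)) ^ (1/p)) hA0 hAtop
    · exact ENNReal.mul_ne_top ENNReal.ofReal_ne_top
        (ENNReal.rpow_ne_top_of_nonneg (by positivity) hT)
    · intro b hb1
      have hb : 0 < b := by linarith
      exact le_trans (hlow b hb1) (le_trans (hkey b hb) (mul_le_mul_right (hub b hb) _))
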